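/- Let Φ(z, t) = (φ_t(z), τ(t)) be a fiberwise Hamiltonian deformation on U×G with primitive function p: U×G→ℝ satisfying D_z p_t(z) = a(φ_t(z))ᵀ D_zφ_t(z) − a(z)ᵀ, where Ω = Daᵀ − Da, and D_zφ_t(z) invertible. Define, for each parameter component t_i, 𝓜^i(φ_t(z), τ(t)) := a(φ_t(z))ᵀ ∂_{t_i}φ_t(z) − ∂_{t_i}p_t(z). Then D_z𝓜^i(φ_t(z), τ(t)) = −(∂_{t_i}φ_t(z))ᵀ Ω(φ_t(z)); equivalently, the generator 𝓕^i satisfies 𝓕^i = Ω^{−1}(D_z𝓜^i)ᵀ, i.e., the moment map 𝓜^i is a Hamiltonian for the parameter-variation vector field ∂_{t_i}φ_t. -/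

import Mathlib

section helpers
variable {E F G : Type*} [NormedAddCommGroup E] [NormedSpace ℝ E]
  [NormedAddCommGroup F] [NormedSpace ℝ F] [NormedAddCommGroup G] [NormedSpace ℝ G]

theorem hasFDerivAt_p2 {f : E × F → G} (hf : Differentiable ℝ f) (x : E) (y : F) :
    HasFDerivAt (fun y' => f (x, y'))
      ((fderiv ℝ f (x, y)).comp (ContinuousLinearMap.inr ℝ E F)) y :=
  ((hf (x, y)).hasFDerivAt).comp y (hasFDerivAt_prodMk_right x y)

theorem hasFDerivAt_p1 {f : E × F → G} (hf : Differentiable ℝ f) (x : E) (y : F) :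
    HasFDerivAt (fun x' => f (x', y))
      ((fderiv ℝ f (x, y)).comp (ContinuousLinearMap.inl ℝ E F)) x :=
  ((hf (x, y)).hasFDerivAt).comp x (hasFDerivAt_prodMk_left x y)

theorem fderiv_p2 {f : E × F → G} (hf : Differentiable ℝ f) (x : E) (y : F) (v : F) :
    fderiv ℝ (fun y' => f (x, y')) y v = fderiv ℝ f (x, y) (0, v) := by
  rw [(hasFDerivAt_p2 hf x y).fderiv]; rfl

theorem fderiv_p1 {f : E × F → G} (hf : Differentiable ℝ f) (x : E) (y : F) (u : E) :
    fderiv ℝ (fun x' => f (x', y)) x u = fderiv ℝ f (x, y) (u, 0) := by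
  rw [(hasFDerivAt_p1 hf x y).fderiv]; rfl

theorem hasFDerivAt_fderiv_apply {f : E → G} (hf : ContDiff ℝ 2 f) (u : E) (x : E) :
    HasFDerivAt (fun x' => fderiv ℝ f x' u)
      ((ContinuousLinearMap.apply ℝ G u).comp (fderiv ℝ (fderiv ℝ f) x)) x := by
  have h1 : HasFDerivAt (fderiv ℝ f) (fderiv ℝ (fderiv ℝ f) x) x :=
    (((hf.fderiv_right (m := 1) (by norm_num)).differentiable (by norm_num)) x).hasFDerivAt
  exact ((ContinuousLinearMap.apply ℝ G u).hasFDerivAt).comp x h1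

theorem sndderiv_symm {f : E → G} (hf : ContDiff ℝ 2 f) (x : E) (u v : E) :
    fderiv ℝ (fderiv ℝ f) x u v = fderiv ℝ (fderiv ℝ f) x v u :=
  second_derivative_symmetric
    (fun y => (hf.differentiable (by norm_num) y).hasFDerivAt)
    ((((hf.fderiv_right (m := 1) (by norm_num)).differentiable (by norm_num)) x).hasFDerivAt) u v

theorem hasFDerivAt_mixed2 {f : E × F → G} (hf : ContDiff ℝ 2 f) (x : E) (y : F) (u : E × F) :
    HasFDerivAt (fun y' => fderiv ℝ f (x, y') u)
      ((((ContinuousLinearMap.apply ℝ G u).comp (fderiv ℝ (fderiv ℝ f) (x, y)))).comp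
        (ContinuousLinearMap.inr ℝ E F)) y :=
  (hasFDerivAt_fderiv_apply hf u (x, y)).comp y (hasFDerivAt_prodMk_right x y)

theorem hasFDerivAt_mixed1 {f : E × F → G} (hf : ContDiff ℝ 2 f) (x : E) (y : F) (u : E × F) :
    HasFDerivAt (fun x' => fderiv ℝ f (x', y) u)
      ((((ContinuousLinearMap.apply ℝ G u).comp (fderiv ℝ (fderiv ℝ f) (x, y)))).comp
        (ContinuousLinearMap.inl ℝ E F)) x :=
  by have h := (hasFDerivAt_fderiv_apply hf u (x, y)).comp x (hasFDerivAt_prodMk_left (𝕜 := ℝ) x y); exact h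

end helpers

theorem clm_pi_expand {N : ℕ} (L : (Fin N → ℝ) →L[ℝ] (Fin N → ℝ)) (x : Fin N → ℝ) (r : Fin N) :
    L x r = ∑ q, x q * L (Pi.single q 1) r := by
  have hx : x = ∑ q, x q • (Pi.single q 1 : Fin N → ℝ) := by
    funext j
    simp [Finset.sum_apply, Pi.single_apply]
  conv_lhs => rw [hx]
  rw [map_sum]
  simp [Finset.sum_apply]


/-- Matrix of the exact 2-form `Ω(z) = Da(z)ᵀ − Da(z)`. -/
noncomputable def exactOmega {N : ℕ} (a : (Fin N → ℝ) → (Fin N → ℝ))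
    (z : Fin N → ℝ) (p q : Fin N) : ℝ :=
  fderiv ℝ a z (Pi.single p 1) q - fderiv ℝ a z (Pi.single q 1) p

/-- the moment map of a fiberwise Hamiltonian deformation is a
Hamiltonian for the parameter-variation vector field:
`D_z𝓜^i(φ_t(z),τ(t)) = −(∂_{t_i}φ_t(z))ᵀ Ω(φ_t(z))`. -/
theorem moment_map_generates_deformation
    (N m : ℕ)
    (a : (Fin N → ℝ) → (Fin N → ℝ)) (ha : ContDiff ℝ 1 a)
    (φ : (Fin m → ℝ) → (Fin N → ℝ) → (Fin N → ℝ))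
    (hφ : ContDiff ℝ 2 (fun q : (Fin m → ℝ) × (Fin N → ℝ) => φ q.1 q.2))
    (τ : (Fin m → ℝ) → (Fin m → ℝ))
    (ψ : (Fin m → ℝ) → (Fin N → ℝ) → (Fin N → ℝ))
    (hψ : ContDiff ℝ 1 (fun q : (Fin m → ℝ) × (Fin N → ℝ) => ψ q.1 q.2))
    (hψφ : ∀ (t : Fin m → ℝ) (z : Fin N → ℝ), ψ t (φ t z) = z)
    (hφψ : ∀ (t : Fin m → ℝ) (w : Fin N → ℝ), φ t (ψ t w) = w)
    (p : (Fin m → ℝ) → (Fin N → ℝ) → ℝ)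
    (hp : ContDiff ℝ 2 (fun q : (Fin m → ℝ) × (Fin N → ℝ) => p q.1 q.2))
    (hprim : ∀ (t : Fin m → ℝ) (z : Fin N → ℝ) (v : Fin N → ℝ),
      fderiv ℝ (p t) z v
        = (∑ q, a (φ t z) q * (fderiv ℝ (φ t) z v) q) - ∑ q, a z q * v q)
    (M : Fin m → (Fin N → ℝ) → (Fin m → ℝ) → ℝ)
    (hMdiff : ∀ (i : Fin m) (s : Fin m → ℝ),
      Differentiable ℝ (fun w => M i w s))
    (hM : ∀ (i : Fin m) (t : Fin m → ℝ) (z : Fin N → ℝ),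
      M i (φ t z) (τ t)
        = (∑ q, a (φ t z) q *
            (fderiv ℝ (fun t' => φ t' z) t (Pi.single i 1)) q)
          - fderiv ℝ (fun t' => p t' z) t (Pi.single i 1)) :
    ∀ (i : Fin m) (t : Fin m → ℝ) (z : Fin N → ℝ) (v : Fin N → ℝ),
      fderiv ℝ (fun w => M i w (τ t)) (φ t z) v
        = -∑ r, ∑ q, (fderiv ℝ (fun t' => φ t' z) t (Pi.single i 1)) r *
            exactOmega a (φ t z) r q * v q := by
  intro i t z v'
  have hΦd : Differentiable ℝ (fun q : (Fin m → ℝ) × (Fin N → ℝ) => φ q.1 q.2) := hφ.differentiable (by norm_num)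
  have hPd : Differentiable ℝ (fun q : (Fin m → ℝ) × (Fin N → ℝ) => p q.1 q.2) := hp.differentiable (by norm_num)
  have hΨd : Differentiable ℝ (fun q : (Fin m → ℝ) × (Fin N → ℝ) => ψ q.1 q.2) := hψ.differentiable (by norm_num)
  -- Step 1: derivative of z' ↦ M i (φ t z') (τ t)
  have hLz : HasFDerivAt (fun z' => M i (φ t z') (τ t))
      ((fderiv ℝ (fun w => M i w (τ t)) (φ t z)).comp
        ((fderiv ℝ (fun q : (Fin m → ℝ) × (Fin N → ℝ) => φ q.1 q.2) (t, z)).comp (ContinuousLinearMap.inr ℝ (Fin m → ℝ) (Fin N → ℝ)))) z :=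
    ((hMdiff i (τ t) (φ t z)).hasFDerivAt).comp z (hasFDerivAt_p2 hΦd t z)
  -- Step 2: derivative of the RHS of hM as a function of z'
  have hAq : ∀ q : Fin N, HasFDerivAt (fun z' => a (φ t z') q)
      ((ContinuousLinearMap.proj q).comp ((fderiv ℝ a (φ t z)).comp
        ((fderiv ℝ (fun q : (Fin m → ℝ) × (Fin N → ℝ) => φ q.1 q.2) (t, z)).comp (ContinuousLinearMap.inr ℝ (Fin m → ℝ) (Fin N → ℝ))))) z := by
    intro q
    exact ((ContinuousLinearMap.proj q).hasFDerivAt).comp z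
      (((ha.differentiable (by norm_num) (φ t z)).hasFDerivAt).comp z (hasFDerivAt_p2 hΦd t z))
  have hBq : ∀ q : Fin N, HasFDerivAt (fun z' => fderiv ℝ (fun q : (Fin m → ℝ) × (Fin N → ℝ) => φ q.1 q.2) (t, z') ((Pi.single i 1 : Fin m → ℝ), 0) q)
      ((ContinuousLinearMap.proj q).comp
        ((((ContinuousLinearMap.apply ℝ (Fin N → ℝ) (((Pi.single i 1 : Fin m → ℝ), 0) : (Fin m → ℝ) × (Fin N → ℝ))).comp
          (fderiv ℝ (fderiv ℝ (fun q : (Fin m → ℝ) × (Fin N → ℝ) => φ q.1 q.2)) (t, z)))).comp (ContinuousLinearMap.inr ℝ (Fin m → ℝ) (Fin N → ℝ)))) z := by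
    intro q
    exact ((ContinuousLinearMap.proj q).hasFDerivAt).comp z (hasFDerivAt_mixed2 hφ t z ((Pi.single i 1 : Fin m → ℝ), 0))
  have hsum := HasFDerivAt.fun_sum (u := Finset.univ) (fun q _ => (hAq q).fun_mul (hBq q))
  have hP2 := hasFDerivAt_mixed2 hp t z (((Pi.single i 1 : Fin m → ℝ), 0) : (Fin m → ℝ) × (Fin N → ℝ))
  have hg := hsum.fun_sub hP2
  -- Step 3: the two functions agree
  have hfun : (fun z' => M i (φ t z') (τ t))
      = fun z' => (∑ q, a (φ t z') q * fderiv ℝ (fun q : (Fin m → ℝ) × (Fin N → ℝ) => φ q.1 q.2) (t, z') ((Pi.single i 1 : Fin m → ℝ), 0) q)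
          - fderiv ℝ (fun q : (Fin m → ℝ) × (Fin N → ℝ) => p q.1 q.2) (t, z') ((Pi.single i 1 : Fin m → ℝ), 0) := by
    funext z'
    rw [hM i t z']
    have h1 : fderiv ℝ (fun t' => φ t' z') t (Pi.single i 1)
        = fderiv ℝ (fun q : (Fin m → ℝ) × (Fin N → ℝ) => φ q.1 q.2) (t, z') ((Pi.single i 1 : Fin m → ℝ), 0) := fderiv_p1 hΦd t z' (Pi.single i 1 : Fin m → ℝ)
    have h2 : fderiv ℝ (fun t' => p t' z') t (Pi.single i 1)
        = fderiv ℝ (fun q : (Fin m → ℝ) × (Fin N → ℝ) => p q.1 q.2) (t, z') ((Pi.single i 1 : Fin m → ℝ), 0) := fderiv_p1 hPd t z' (Pi.single i 1 : Fin m → ℝ)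
    rw [h1, h2]
  rw [hfun] at hLz
  have hEq1 := hLz.unique hg
  -- Step 4: mixed second derivative of p via the primitive-function identity
  have key2 : ∀ v : Fin N → ℝ,
      (fderiv ℝ (fderiv ℝ (fun q : (Fin m → ℝ) × (Fin N → ℝ) => p q.1 q.2)) (t, z)) ((Pi.single i 1 : Fin m → ℝ), 0) (0, v)
      = ∑ q, (a (φ t z) q * (fderiv ℝ (fderiv ℝ (fun q : (Fin m → ℝ) × (Fin N → ℝ) => φ q.1 q.2)) (t, z)) ((Pi.single i 1 : Fin m → ℝ), 0) (0, v) q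
          + (fderiv ℝ (fun q : (Fin m → ℝ) × (Fin N → ℝ) => φ q.1 q.2) (t, z)) (0, v) q * (fderiv ℝ a (φ t z)) ((fderiv ℝ (fun q : (Fin m → ℝ) × (Fin N → ℝ) => φ q.1 q.2) (t, z)) ((Pi.single i 1 : Fin m → ℝ), 0)) q) := by
    intro v
    have hTP := hasFDerivAt_mixed1 hp t z (((0 : Fin m → ℝ), v) : (Fin m → ℝ) × (Fin N → ℝ))
    have hA'q : ∀ q : Fin N, HasFDerivAt (fun t' => a (φ t' z) q)
        ((ContinuousLinearMap.proj q).comp ((fderiv ℝ a (φ t z)).comp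
          ((fderiv ℝ (fun q : (Fin m → ℝ) × (Fin N → ℝ) => φ q.1 q.2) (t, z)).comp (ContinuousLinearMap.inl ℝ (Fin m → ℝ) (Fin N → ℝ))))) t := by
      intro q
      exact ((ContinuousLinearMap.proj q).hasFDerivAt).comp t
        (((ha.differentiable (by norm_num) (φ t z)).hasFDerivAt).comp t (hasFDerivAt_p1 hΦd t z))
    have hB'q : ∀ q : Fin N, HasFDerivAt (fun t' => fderiv ℝ (fun q : (Fin m → ℝ) × (Fin N → ℝ) => φ q.1 q.2) (t', z) (0, v) q)
        ((ContinuousLinearMap.proj q).comp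
          ((((ContinuousLinearMap.apply ℝ (Fin N → ℝ)
              (((0 : Fin m → ℝ), v) : (Fin m → ℝ) × (Fin N → ℝ))).comp
            (fderiv ℝ (fderiv ℝ (fun q : (Fin m → ℝ) × (Fin N → ℝ) => φ q.1 q.2)) (t, z)))).comp (ContinuousLinearMap.inl ℝ (Fin m → ℝ) (Fin N → ℝ)))) t := by
      intro q
      exact ((ContinuousLinearMap.proj q).hasFDerivAt).comp t (hasFDerivAt_mixed1 hφ t z (0, v))
    have hsum' := HasFDerivAt.fun_sum (u := Finset.univ) (fun q _ => (hA'q q).fun_mul (hB'q q))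
    have hconst : HasFDerivAt (fun _ : Fin m → ℝ => ∑ q, a z q * v q)
        (0 : (Fin m → ℝ) →L[ℝ] ℝ) t := hasFDerivAt_const _ _
    have hg' := hsum'.fun_sub hconst
    have hfunT : (fun t' => fderiv ℝ (fun q : (Fin m → ℝ) × (Fin N → ℝ) => p q.1 q.2) (t', z) (0, v))
        = fun t' => (∑ q, a (φ t' z) q * fderiv ℝ (fun q : (Fin m → ℝ) × (Fin N → ℝ) => φ q.1 q.2) (t', z) (0, v) q) - ∑ q, a z q * v q := by
      funext t'
      have h1 : fderiv ℝ (fun q : (Fin m → ℝ) × (Fin N → ℝ) => p q.1 q.2) (t', z) (0, v) = fderiv ℝ (p t') z v :=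
        (fderiv_p2 hPd t' z v).symm
      have h2 : fderiv ℝ (φ t') z v = fderiv ℝ (fun q : (Fin m → ℝ) × (Fin N → ℝ) => φ q.1 q.2) (t', z) (0, v) :=
        fderiv_p2 hΦd t' z v
      rw [h1, hprim t' z v, h2]
    rw [hfunT] at hTP
    have hEq2 := hTP.unique hg'
    have h3 := congrArg (fun (T : (Fin m → ℝ) →L[ℝ] ℝ) => T (Pi.single i 1 : Fin m → ℝ)) hEq2
    simp only [ContinuousLinearMap.sum_apply, ContinuousLinearMap.add_apply,
      ContinuousLinearMap.smul_apply, ContinuousLinearMap.comp_apply,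
      ContinuousLinearMap.sub_apply, ContinuousLinearMap.proj_apply,
      ContinuousLinearMap.apply_apply, ContinuousLinearMap.inl_apply,
      ContinuousLinearMap.zero_apply, sub_zero, smul_eq_mul] at h3
    rw [h3]

  -- Step 5: evaluate hEq1 and cancel using symmetry of second derivatives
  have key1 : ∀ v : Fin N → ℝ,
      fderiv ℝ (fun w => M i w (τ t)) (φ t z) ((fderiv ℝ (fun q : (Fin m → ℝ) × (Fin N → ℝ) => φ q.1 q.2) (t, z)) (0, v))
      = (∑ q, (fderiv ℝ (fun q : (Fin m → ℝ) × (Fin N → ℝ) => φ q.1 q.2) (t, z)) ((Pi.single i 1 : Fin m → ℝ), 0) q * (fderiv ℝ a (φ t z)) ((fderiv ℝ (fun q : (Fin m → ℝ) × (Fin N → ℝ) => φ q.1 q.2) (t, z)) (0, v)) q)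
        - ∑ q, (fderiv ℝ (fun q : (Fin m → ℝ) × (Fin N → ℝ) => φ q.1 q.2) (t, z)) (0, v) q * (fderiv ℝ a (φ t z)) ((fderiv ℝ (fun q : (Fin m → ℝ) × (Fin N → ℝ) => φ q.1 q.2) (t, z)) ((Pi.single i 1 : Fin m → ℝ), 0)) q := by
    intro v
    have h4 := congrArg (fun (T : (Fin N → ℝ) →L[ℝ] ℝ) => T v) hEq1
    simp only [ContinuousLinearMap.sum_apply, ContinuousLinearMap.add_apply,
      ContinuousLinearMap.smul_apply, ContinuousLinearMap.comp_apply,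
      ContinuousLinearMap.sub_apply, ContinuousLinearMap.proj_apply,
      ContinuousLinearMap.apply_apply, ContinuousLinearMap.inr_apply,
      smul_eq_mul] at h4
    have hsymP : (fderiv ℝ (fderiv ℝ (fun q : (Fin m → ℝ) × (Fin N → ℝ) => p q.1 q.2)) (t, z)) (0, v) ((Pi.single i 1 : Fin m → ℝ), 0) = (fderiv ℝ (fderiv ℝ (fun q : (Fin m → ℝ) × (Fin N → ℝ) => p q.1 q.2)) (t, z)) ((Pi.single i 1 : Fin m → ℝ), 0) (0, v) :=
      sndderiv_symm hp (t, z) _ _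
    have hsymΦ : ∀ q : Fin N, (fderiv ℝ (fderiv ℝ (fun q : (Fin m → ℝ) × (Fin N → ℝ) => φ q.1 q.2)) (t, z)) (0, v) ((Pi.single i 1 : Fin m → ℝ), 0) q = (fderiv ℝ (fderiv ℝ (fun q : (Fin m → ℝ) × (Fin N → ℝ) => φ q.1 q.2)) (t, z)) ((Pi.single i 1 : Fin m → ℝ), 0) (0, v) q :=
      fun q => congrFun (sndderiv_symm hφ (t, z) (0, v) ((Pi.single i 1 : Fin m → ℝ), 0)) q
    rw [h4, hsymP, key2 v]
    rw [Finset.sum_add_distrib, Finset.sum_add_distrib]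
    rw [show (∑ q, a (φ t z) q * (fderiv ℝ (fderiv ℝ (fun q : (Fin m → ℝ) × (Fin N → ℝ) => φ q.1 q.2)) (t, z)) (0, v) ((Pi.single i 1 : Fin m → ℝ), 0) q)
        = ∑ q, a (φ t z) q * (fderiv ℝ (fderiv ℝ (fun q : (Fin m → ℝ) × (Fin N → ℝ) => φ q.1 q.2)) (t, z)) ((Pi.single i 1 : Fin m → ℝ), 0) (0, v) q from
      Finset.sum_congr rfl fun q _ => by rw [hsymΦ q]]
    ring
  -- Step 6: invert the z-derivative of φ
  have hψat : HasFDerivAt (ψ t)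
      ((fderiv ℝ (fun q : (Fin m → ℝ) × (Fin N → ℝ) => ψ q.1 q.2) (t, φ t z)).comp (ContinuousLinearMap.inr ℝ (Fin m → ℝ) (Fin N → ℝ)))
      (φ t z) := hasFDerivAt_p2 hΨd t (φ t z)
  have hφat : HasFDerivAt (φ t)
      ((fderiv ℝ (fun q : (Fin m → ℝ) × (Fin N → ℝ) => φ q.1 q.2) (t, z)).comp (ContinuousLinearMap.inr ℝ (Fin m → ℝ) (Fin N → ℝ))) (ψ t (φ t z)) := by
    rw [hψφ t z]; exact hasFDerivAt_p2 hΦd t z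
  have hcompψ := hφat.comp (φ t z) hψat
  have hidfun : (fun w'' => φ t (ψ t w'')) = id := funext (hφψ t)
  have hid : HasFDerivAt (fun w'' => φ t (ψ t w''))
      (ContinuousLinearMap.id ℝ (Fin N → ℝ)) (φ t z) := by
    rw [hidfun]; exact hasFDerivAt_id _
  have hinv := hcompψ.unique hid
  have hv : (fderiv ℝ (fun q : (Fin m → ℝ) × (Fin N → ℝ) => φ q.1 q.2) (t, z)) (0, fderiv ℝ (ψ t) (φ t z) v') = v' := by
    have h5 := congrArg (fun (T : (Fin N → ℝ) →L[ℝ] (Fin N → ℝ)) => T v') hinv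
    simp only [ContinuousLinearMap.comp_apply, ContinuousLinearMap.inr_apply,
      ContinuousLinearMap.id_apply] at h5
    rw [hψat.fderiv]
    exact h5
  -- Step 7: conclude
  have hmain : fderiv ℝ (fun w => M i w (τ t)) (φ t z) v'
      = (∑ q, (fderiv ℝ (fun q : (Fin m → ℝ) × (Fin N → ℝ) => φ q.1 q.2) (t, z)) ((Pi.single i 1 : Fin m → ℝ), 0) q * (fderiv ℝ a (φ t z)) v' q)
        - ∑ q, v' q * (fderiv ℝ a (φ t z)) ((fderiv ℝ (fun q : (Fin m → ℝ) × (Fin N → ℝ) => φ q.1 q.2) (t, z)) ((Pi.single i 1 : Fin m → ℝ), 0)) q := by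
    have h6 := key1 (fderiv ℝ (ψ t) (φ t z) v')
    rw [hv] at h6
    exact h6
  have hDtφ : fderiv ℝ (fun t' => φ t' z) t (Pi.single i 1) = (fderiv ℝ (fun q : (Fin m → ℝ) × (Fin N → ℝ) => φ q.1 q.2) (t, z)) ((Pi.single i 1 : Fin m → ℝ), 0) :=
    fderiv_p1 hΦd t z (Pi.single i 1 : Fin m → ℝ)
  rw [hmain, hDtφ]
  -- final algebra
  unfold exactOmega
  have e1 : ∀ q, (fderiv ℝ a (φ t z)) v' q = ∑ r, v' r * (fderiv ℝ a (φ t z)) (Pi.single r 1) q :=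
    fun q => clm_pi_expand (fderiv ℝ a (φ t z)) v' q
  have e2 : ∀ q, (fderiv ℝ a (φ t z)) ((fderiv ℝ (fun q : (Fin m → ℝ) × (Fin N → ℝ) => φ q.1 q.2) (t, z)) ((Pi.single i 1 : Fin m → ℝ), 0)) q
      = ∑ r, (fderiv ℝ (fun q : (Fin m → ℝ) × (Fin N → ℝ) => φ q.1 q.2) (t, z)) ((Pi.single i 1 : Fin m → ℝ), 0) r * (fderiv ℝ a (φ t z)) (Pi.single r 1) q :=
    fun q => clm_pi_expand (fderiv ℝ a (φ t z)) ((fderiv ℝ (fun q : (Fin m → ℝ) × (Fin N → ℝ) => φ q.1 q.2) (t, z)) ((Pi.single i 1 : Fin m → ℝ), 0)) q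
  simp only [e1, e2, Finset.mul_sum]
  calc (∑ q, ∑ r, (fderiv ℝ (fun q : (Fin m → ℝ) × (Fin N → ℝ) => φ q.1 q.2) (t, z)) ((Pi.single i 1 : Fin m → ℝ), 0) q * (v' r * (fderiv ℝ a (φ t z)) (Pi.single r 1) q))
        - ∑ q, ∑ r, v' q * ((fderiv ℝ (fun q : (Fin m → ℝ) × (Fin N → ℝ) => φ q.1 q.2) (t, z)) ((Pi.single i 1 : Fin m → ℝ), 0) r * (fderiv ℝ a (φ t z)) (Pi.single r 1) q)
      = (∑ r, ∑ q, (fderiv ℝ (fun q : (Fin m → ℝ) × (Fin N → ℝ) => φ q.1 q.2) (t, z)) ((Pi.single i 1 : Fin m → ℝ), 0) r * ((fderiv ℝ a (φ t z)) (Pi.single q 1) r) * v' q)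
        - ∑ r, ∑ q, (fderiv ℝ (fun q : (Fin m → ℝ) × (Fin N → ℝ) => φ q.1 q.2) (t, z)) ((Pi.single i 1 : Fin m → ℝ), 0) r * ((fderiv ℝ a (φ t z)) (Pi.single r 1) q) * v' q := by
        congr 1
        · exact Finset.sum_congr rfl fun q _ => Finset.sum_congr rfl fun r _ => by ring
        · rw [Finset.sum_comm]
          exact Finset.sum_congr rfl fun q _ => Finset.sum_congr rfl fun r _ => by ring
    _ = ∑ r, ∑ q, ((fderiv ℝ (fun q : (Fin m → ℝ) × (Fin N → ℝ) => φ q.1 q.2) (t, z)) ((Pi.single i 1 : Fin m → ℝ), 0) r * ((fderiv ℝ a (φ t z)) (Pi.single q 1) r) * v' q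
          - (fderiv ℝ (fun q : (Fin m → ℝ) × (Fin N → ℝ) => φ q.1 q.2) (t, z)) ((Pi.single i 1 : Fin m → ℝ), 0) r * ((fderiv ℝ a (φ t z)) (Pi.single r 1) q) * v' q) := by
        rw [← Finset.sum_sub_distrib]
        exact Finset.sum_congr rfl fun r _ => by rw [← Finset.sum_sub_distrib]
    _ = -∑ r, ∑ q, (fderiv ℝ (fun q : (Fin m → ℝ) × (Fin N → ℝ) => φ q.1 q.2) (t, z)) ((Pi.single i 1 : Fin m → ℝ), 0) r *
          ((fderiv ℝ a (φ t z)) (Pi.single r 1) q - (fderiv ℝ a (φ t z)) (Pi.single q 1) r) * v' q := by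
        rw [← Finset.sum_neg_distrib]
        refine Finset.sum_congr rfl fun r _ => ?_
        rw [← Finset.sum_neg_distrib]
        exact Finset.sum_congr rfl fun q _ => by ring
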